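/- Let X and Y be real normed (Banach) spaces, K a nonempty bounded subset of X, ℓ₀ ∈ Y, π₀ : X → Y a bounded linear operator, and F : X → Y a map bounded on K. For the operator π(x) = ℓ₀ + π₀(x) + F(x) and every natural number n, the affine Kolmogorov n-width of the image set π(K) = {π(x) : x ∈ K} in Y satisfies d_n(π(K))_Y ≤ ‖π₀‖ · d_n(K)_X + sup_{x∈K} ‖F(x)‖_Y. -/

import Mathlib

/-- Deviation of a set `K` from a set `W`: `sup_{x ∈ K} inf_{ξ ∈ W} ‖x - ξ‖`. -/
noncomputable def setDeviation {X : Type*} [NormedAddCommGroup X] (K W : Set X) : ℝ :=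
  sSup ((fun x => Metric.infDist x W) '' K)

/-- The affine Kolmogorov `n`-width `d_n(K)_X`. -/
noncomputable def affKolWidth {X : Type*} [NormedAddCommGroup X] [NormedSpace ℝ X]
    (n : ℕ) (K : Set X) : ℝ :=
  sInf { r : ℝ | ∃ W : AffineSubspace ℝ X, (W : Set X).Nonempty ∧
    FiniteDimensional ℝ W.direction ∧ Module.finrank ℝ W.direction ≤ n ∧
    r = setDeviation K (W : Set X) }

private lemma aux_le_of_eps (a b c : ℝ) (hc : 0 ≤ c) (h : ∀ ε > (0:ℝ), a ≤ b + c * ε) :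
    a ≤ b := by
  refine le_of_forall_pos_le_add fun ε hε => ?_
  have hε' : 0 < ε / (c + 1) := by positivity
  calc a ≤ b + c * (ε / (c + 1)) := h _ hε'
    _ ≤ b + ε := by
        have h1 : c * (ε / (c + 1)) ≤ ε := by
          rw [mul_div_assoc', div_le_iff₀ (by linarith)]
          nlinarith
        linarith

/-- Theorem 1: for `π(x) = ℓ₀ + π₀(x) + F(x)` with `F` bounded on the nonempty bounded set
`K`, one has `d_n(π(K))_Y ≤ ‖π₀‖ d_n(K)_X + sup_{x ∈ K} ‖F(x)‖_Y`. -/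
theorem stmt_10 {X Y : Type*} [NormedAddCommGroup X] [NormedSpace ℝ X] [CompleteSpace X]
    [NormedAddCommGroup Y] [NormedSpace ℝ Y] [CompleteSpace Y]
    (n : ℕ) (K : Set X) (hKne : K.Nonempty) (hKb : Bornology.IsBounded K)
    (ℓ₀ : Y) (π₀ : X →L[ℝ] Y) (F : X → Y)
    (hF : BddAbove ((fun x => ‖F x‖) '' K)) :
    affKolWidth n ((fun x => ℓ₀ + π₀ x + F x) '' K) ≤
      ‖π₀‖ * affKolWidth n K + sSup ((fun x => ‖F x‖) '' K) := by
  obtain ⟨x₀, hx₀⟩ := hKne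
  obtain ⟨C, hC⟩ := isBounded_iff_forall_norm_le.mp hKb
  set S := sSup ((fun x => ‖F x‖) '' K) with hSdef
  have hS0 : 0 ≤ S := Real.sSup_nonneg (by rintro _ ⟨x, _, rfl⟩; positivity)
  have hFle : ∀ x ∈ K, ‖F x‖ ≤ S := fun x hx => le_csSup hF ⟨x, hx, rfl⟩
  -- the candidate set for K
  set T : Set ℝ := { r : ℝ | ∃ W : AffineSubspace ℝ X, (W : Set X).Nonempty ∧
    FiniteDimensional ℝ W.direction ∧ Module.finrank ℝ W.direction ≤ n ∧
    r = setDeviation K (W : Set X) } with hTdef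
  have hTne : T.Nonempty := by
    refine ⟨setDeviation K ((AffineSubspace.mk' x₀ (⊥ : Submodule ℝ X)) : Set X),
      AffineSubspace.mk' x₀ ⊥, ⟨x₀, AffineSubspace.self_mem_mk' _ _⟩, ?_, ?_, rfl⟩
    · rw [AffineSubspace.direction_mk']; infer_instance
    · rw [AffineSubspace.direction_mk']; simp
  -- key step: for each r ∈ T, affKolWidth n (π K) ≤ ‖π₀‖ * r + S
  have hkey : ∀ r ∈ T, affKolWidth n ((fun x => ℓ₀ + π₀ x + F x) '' K) ≤ ‖π₀‖ * r + S := by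
    rintro r ⟨W, ⟨w₀, hw₀⟩, hWfd, hWrk, rfl⟩
    -- the pushforward affine map
    set f : X →ᵃ[ℝ] Y :=
      { toFun := fun x => ℓ₀ + π₀ x
        linear := π₀.toLinearMap
        map_vadd' := by intro p v; simp [vadd_eq_add, map_add]; abel } with hfdef
    set W' : AffineSubspace ℝ Y := W.map f with hW'def
    have hW'dir : W'.direction = (W.direction).map π₀.toLinearMap :=
      AffineSubspace.map_direction f W
    have hfd : FiniteDimensional ℝ W'.direction := by
      rw [hW'dir]; exact Module.Finite.map _ _
    have hrk : Module.finrank ℝ W'.direction ≤ n := by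
      rw [hW'dir]; exact le_trans (Submodule.finrank_map_le _ _) hWrk
    have hW'ne : ((W' : Set Y)).Nonempty := ⟨f w₀, AffineSubspace.mem_map.2 ⟨w₀, hw₀, rfl⟩⟩
    have hWne : ((W : Set X)).Nonempty := ⟨w₀, hw₀⟩
    -- infDist bound termwise
    have hdev : ∀ x ∈ K, Metric.infDist x (W : Set X) ≤ setDeviation K (W : Set X) := by
      intro x hx
      refine le_csSup ⟨C + (‖x₀‖ + Metric.infDist x₀ (W : Set X) + 1), ?_⟩ ⟨x, hx, rfl⟩
      rintro _ ⟨z, hz, rfl⟩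
      obtain ⟨ξ, hξ, hξd⟩ := (Metric.infDist_lt_iff hWne).1
        (lt_add_of_pos_right (Metric.infDist x₀ (W : Set X)) one_pos)
      have h3 : Metric.infDist z (W : Set X) ≤ dist z ξ := Metric.infDist_le_dist_of_mem hξ
      have h4 : dist z ξ ≤ ‖z‖ + ‖ξ‖ := by rw [dist_eq_norm]; exact norm_sub_le _ _
      have h5 : ‖ξ‖ ≤ ‖x₀‖ + dist x₀ ξ := by
        rw [dist_eq_norm]
        calc ‖ξ‖ = ‖x₀ - (x₀ - ξ)‖ := by rw [sub_sub_cancel]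
          _ ≤ ‖x₀‖ + ‖x₀ - ξ‖ := norm_sub_le _ _
      linarith [hC z hz, hξd.le]
    have hr0 : 0 ≤ setDeviation K (W : Set X) :=
      Real.sSup_nonneg (by rintro _ ⟨x, _, rfl⟩; exact Metric.infDist_nonneg)
    -- bound the deviation of the image set from W'
    have hbound : setDeviation ((fun x => ℓ₀ + π₀ x + F x) '' K) (W' : Set Y) ≤
        ‖π₀‖ * setDeviation K (W : Set X) + S := by
      refine Real.sSup_le ?_ (by positivity)
      rintro _ ⟨_, ⟨x, hx, rfl⟩, rfl⟩
      refine aux_le_of_eps _ _ ‖π₀‖ (norm_nonneg _) fun ε hε => ?_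
      obtain ⟨ξ, hξ, hξd⟩ := (Metric.infDist_lt_iff hWne).1
        (lt_add_of_pos_right (Metric.infDist x (W : Set X)) hε)
      have hfξ : f ξ ∈ (W' : Set Y) := AffineSubspace.mem_map.2 ⟨ξ, hξ, rfl⟩
      calc Metric.infDist (ℓ₀ + π₀ x + F x) (W' : Set Y)
          ≤ dist (ℓ₀ + π₀ x + F x) (f ξ) := Metric.infDist_le_dist_of_mem hfξ
        _ = ‖π₀ (x - ξ) + F x‖ := by
            rw [dist_eq_norm]
            simp only [hfdef, AffineMap.coe_mk, map_sub]
            congr 1; abel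
        _ ≤ ‖π₀ (x - ξ)‖ + ‖F x‖ := norm_add_le _ _
        _ ≤ ‖π₀‖ * ‖x - ξ‖ + S := add_le_add (π₀.le_opNorm _) (hFle x hx)
        _ = ‖π₀‖ * dist x ξ + S := by rw [dist_eq_norm]
        _ ≤ ‖π₀‖ * setDeviation K (W : Set X) + S + ‖π₀‖ * ε := by
            have h6 : dist x ξ ≤ setDeviation K (W : Set X) + ε :=
              le_trans hξd.le (add_le_add (hdev x hx) le_rfl)
            nlinarith [mul_le_mul_of_nonneg_left h6 (norm_nonneg π₀)]

    have hin : setDeviation ((fun x => ℓ₀ + π₀ x + F x) '' K) (W' : Set Y) ∈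
        { r : ℝ | ∃ V : AffineSubspace ℝ Y, (V : Set Y).Nonempty ∧
          FiniteDimensional ℝ V.direction ∧ Module.finrank ℝ V.direction ≤ n ∧
          r = setDeviation ((fun x => ℓ₀ + π₀ x + F x) '' K) (V : Set Y) } :=
      ⟨W', hW'ne, hfd, hrk, rfl⟩
    have hbdd : BddBelow { r : ℝ | ∃ V : AffineSubspace ℝ Y, (V : Set Y).Nonempty ∧
          FiniteDimensional ℝ V.direction ∧ Module.finrank ℝ V.direction ≤ n ∧
          r = setDeviation ((fun x => ℓ₀ + π₀ x + F x) '' K) (V : Set Y) } := by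
      refine ⟨0, ?_⟩
      rintro _ ⟨V, _, _, _, rfl⟩
      exact Real.sSup_nonneg (by rintro _ ⟨x, _, rfl⟩; exact Metric.infDist_nonneg)
    exact le_trans (csInf_le hbdd hin) hbound
  -- conclude by approximating the infimum
  refine aux_le_of_eps _ _ ‖π₀‖ (norm_nonneg _) fun ε hε => ?_
  obtain ⟨r, hrT, hrlt⟩ := Real.lt_sInf_add_pos hTne hε
  calc affKolWidth n ((fun x => ℓ₀ + π₀ x + F x) '' K) ≤ ‖π₀‖ * r + S := hkey r hrT
    _ ≤ ‖π₀‖ * (sInf T + ε) + S :=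
        add_le_add (mul_le_mul_of_nonneg_left hrlt.le (norm_nonneg _)) le_rfl
    _ = ‖π₀‖ * affKolWidth n K + S + ‖π₀‖ * ε := by
        rw [affKolWidth, ← hTdef]; ring
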